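/- arXiv:1211.0540 — 2 statements merged into one kernel-verified Lean document; each statement's English description precedes it below -/
import Mathlib

section
/- Let d ≥ 2, let b : [−1,1] → ℝ≥0 be measurable and λ ∈ ℝ. Let f : ℝ^d → ℝ≥0 be measurable such that (v, v∗, σ) ↦ f(v) f(v∗) ‖v − v∗‖^λ b((v − v∗)·σ/‖v − v∗‖) is integrable on ℝ^d × ℝ^d × S^{d−1}. Then for every ζ ∈ ℝ^d the Fourier transform of the collision operator satisfies (2π)^{−d/2} ∫_{ℝ^d} ∫_{ℝ^d} ∫_{S^{d−1}} f(v) f(v∗) ‖u‖^λ b(û·σ) ( e^{−i ζ·v'} − e^{−i ζ·v} ) dσ dv∗ dv = ∫_{ℝ^d} G(u, ζ) · (2π)^{−d/2} ∫_{ℝ^d} f(v) f(v − u) e^{−i ζ·v} dv du, where u = v − v∗, û = u/‖u‖, v' = v + (1/2)(‖u‖σ − u), and G(u, ζ) = ‖u‖^λ ∫_{S^{d−1}} b(û·σ) ( e^{−i (1/2) ζ·(‖u‖σ)} e^{i (1/2) ζ·u} − 1 ) dσ. -/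
open MeasureTheory Real
open scoped RealInnerProductSpace
open scoped ENNReal NNReal

/-- The Fourier transform of the elastic Boltzmann collision operator, obtained
by taking the test function `φ(v) = (2π)^{-d/2} e^{-i ζ·v}` in the weak form,
equals the weighted integral `∫ G(u, ζ) F[f(v) f(v-u)](ζ) du`. -/
theorem boltzmann_fourier_transform_form
    (d : ℕ) (hd : 2 ≤ d)
    (b : ℝ → ℝ) (hb_meas : Measurable b) (hb_nonneg : ∀ x, 0 ≤ b x)
    (lam : ℝ)
    (f : EuclideanSpace ℝ (Fin d) → ℝ) (hf_meas : Measurable f)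
    (hf_nonneg : ∀ v, 0 ≤ f v)
    (hint : Integrable
      (fun p : EuclideanSpace ℝ (Fin d) × EuclideanSpace ℝ (Fin d) ×
          Metric.sphere (0 : EuclideanSpace ℝ (Fin d)) 1 =>
        f p.1 * f p.2.1 * ‖p.1 - p.2.1‖ ^ lam *
          b (⟪p.1 - p.2.1, (p.2.2 : EuclideanSpace ℝ (Fin d))⟫ / ‖p.1 - p.2.1‖))
      (volume.prod (volume.prod
        ((volume : Measure (EuclideanSpace ℝ (Fin d))).toSphere))))
    (G : EuclideanSpace ℝ (Fin d) → EuclideanSpace ℝ (Fin d) → ℂ)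
    (hG : ∀ u ζ, G u ζ = (‖u‖ ^ lam : ℝ) *
      ∫ σ : Metric.sphere (0 : EuclideanSpace ℝ (Fin d)) 1,
        (b (⟪u, (σ : EuclideanSpace ℝ (Fin d))⟫ / ‖u‖) : ℂ) *
          (Complex.exp (-Complex.I * ((1 / 2 : ℝ) * ⟪ζ, ‖u‖ • (σ : EuclideanSpace ℝ (Fin d))⟫ : ℝ)) *
            Complex.exp (Complex.I * ((1 / 2 : ℝ) * ⟪ζ, u⟫ : ℝ)) - 1)
        ∂((volume : Measure (EuclideanSpace ℝ (Fin d))).toSphere))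
    (ζ : EuclideanSpace ℝ (Fin d)) :
    ((((2 * π) ^ (-(d : ℝ) / 2) : ℝ)) : ℂ) *
      ∫ v : EuclideanSpace ℝ (Fin d),
        ∫ vs : EuclideanSpace ℝ (Fin d),
          ∫ σ : Metric.sphere (0 : EuclideanSpace ℝ (Fin d)) 1,
            ((f v * f vs * ‖v - vs‖ ^ lam *
                b (⟪v - vs, (σ : EuclideanSpace ℝ (Fin d))⟫ / ‖v - vs‖) : ℝ) : ℂ) *
              (Complex.exp (-Complex.I *
                  (⟪ζ, v + (1 / 2 : ℝ) • (‖v - vs‖ • (σ : EuclideanSpace ℝ (Fin d)) - (v - vs))⟫ : ℝ))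
                - Complex.exp (-Complex.I * (⟪ζ, v⟫ : ℝ)))
            ∂((volume : Measure (EuclideanSpace ℝ (Fin d))).toSphere)
    =
    ∫ u : EuclideanSpace ℝ (Fin d),
      G u ζ * (((((2 * π) ^ (-(d : ℝ) / 2) : ℝ)) : ℂ) *
        ∫ v : EuclideanSpace ℝ (Fin d),
          ((f v * f (v - u) : ℝ) : ℂ) * Complex.exp (-Complex.I * (⟪ζ, v⟫ : ℝ))) := by
  classical
  set μ : Measure (EuclideanSpace ℝ (Fin d)) := volume with hμdef
  set ν : Measure (Metric.sphere (0 : EuclideanSpace ℝ (Fin d)) 1) := μ.toSphere with hνdef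
  set c : ℂ := ((((2 * π) ^ (-(d : ℝ) / 2) : ℝ)) : ℂ) with hcdef
  set H : EuclideanSpace ℝ (Fin d) → EuclideanSpace ℝ (Fin d) →
      Metric.sphere (0 : EuclideanSpace ℝ (Fin d)) 1 → ℂ :=
    fun v vs σ =>
      ((f v * f vs * ‖v - vs‖ ^ lam *
          b (⟪v - vs, (σ : EuclideanSpace ℝ (Fin d))⟫ / ‖v - vs‖) : ℝ) : ℂ) *
        (Complex.exp (-Complex.I *
            (⟪ζ, v + (1 / 2 : ℝ) • (‖v - vs‖ • (σ : EuclideanSpace ℝ (Fin d)) - (v - vs))⟫ : ℝ))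
          - Complex.exp (-Complex.I * (⟪ζ, v⟫ : ℝ))) with hHdef
  -- measurability of H
  have hmeasK : Measurable (fun p : EuclideanSpace ℝ (Fin d) × EuclideanSpace ℝ (Fin d) ×
      Metric.sphere (0 : EuclideanSpace ℝ (Fin d)) 1 =>
      f p.1 * f p.2.1 * ‖p.1 - p.2.1‖ ^ lam *
        b (⟪p.1 - p.2.1, (p.2.2 : EuclideanSpace ℝ (Fin d))⟫ / ‖p.1 - p.2.1‖)) := by
    have hsub : Measurable (fun p : EuclideanSpace ℝ (Fin d) × EuclideanSpace ℝ (Fin d) ×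
        Metric.sphere (0 : EuclideanSpace ℝ (Fin d)) 1 => p.1 - p.2.1) :=
      measurable_fst.sub (measurable_fst.comp measurable_snd)
    have hσ : Measurable (fun p : EuclideanSpace ℝ (Fin d) × EuclideanSpace ℝ (Fin d) ×
        Metric.sphere (0 : EuclideanSpace ℝ (Fin d)) 1 =>
        ((p.2.2 : EuclideanSpace ℝ (Fin d)))) :=
      continuous_subtype_val.measurable.comp (measurable_snd.comp measurable_snd)
    have hrpow : Measurable (fun p : EuclideanSpace ℝ (Fin d) × EuclideanSpace ℝ (Fin d) ×
        Metric.sphere (0 : EuclideanSpace ℝ (Fin d)) 1 => ‖p.1 - p.2.1‖ ^ lam) := by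
      have heq : (fun p : EuclideanSpace ℝ (Fin d) × EuclideanSpace ℝ (Fin d) ×
          Metric.sphere (0 : EuclideanSpace ℝ (Fin d)) 1 => ‖p.1 - p.2.1‖ ^ lam)
          = fun p => (((‖p.1 - p.2.1‖₊ : ℝ≥0∞)) ^ lam).toReal := by
        funext p
        rw [← ENNReal.toReal_rpow]
        simp
      rw [heq]
      exact ENNReal.measurable_toReal.comp
        (ENNReal.continuous_rpow_const.measurable.comp
          (measurable_coe_nnreal_ennreal.comp hsub.nnnorm))
    exact (((hf_meas.comp measurable_fst).mul
        (hf_meas.comp (measurable_fst.comp measurable_snd))).mul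
        hrpow).mul
      (hb_meas.comp ((hsub.inner hσ).div hsub.norm))
  have hmeasH : Measurable (fun p : EuclideanSpace ℝ (Fin d) × EuclideanSpace ℝ (Fin d) ×
      Metric.sphere (0 : EuclideanSpace ℝ (Fin d)) 1 => H p.1 p.2.1 p.2.2) := by
    have hsub : Measurable (fun p : EuclideanSpace ℝ (Fin d) × EuclideanSpace ℝ (Fin d) ×
        Metric.sphere (0 : EuclideanSpace ℝ (Fin d)) 1 => p.1 - p.2.1) :=
      measurable_fst.sub (measurable_fst.comp measurable_snd)
    have hσ : Measurable (fun p : EuclideanSpace ℝ (Fin d) × EuclideanSpace ℝ (Fin d) ×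
        Metric.sphere (0 : EuclideanSpace ℝ (Fin d)) 1 =>
        ((p.2.2 : EuclideanSpace ℝ (Fin d)))) :=
      continuous_subtype_val.measurable.comp (measurable_snd.comp measurable_snd)
    have hvec : Measurable (fun p : EuclideanSpace ℝ (Fin d) × EuclideanSpace ℝ (Fin d) ×
        Metric.sphere (0 : EuclideanSpace ℝ (Fin d)) 1 =>
        p.1 + (1 / 2 : ℝ) • (‖p.1 - p.2.1‖ • (p.2.2 : EuclideanSpace ℝ (Fin d)) - (p.1 - p.2.1))) :=
      measurable_fst.add (((hsub.norm.smul hσ).sub hsub).const_smul (1 / 2 : ℝ))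
    have h1 : Measurable (fun p : EuclideanSpace ℝ (Fin d) × EuclideanSpace ℝ (Fin d) ×
        Metric.sphere (0 : EuclideanSpace ℝ (Fin d)) 1 =>
        Complex.exp (-Complex.I * (⟪ζ, p.1 + (1 / 2 : ℝ) • (‖p.1 - p.2.1‖ •
          (p.2.2 : EuclideanSpace ℝ (Fin d)) - (p.1 - p.2.1))⟫ : ℝ))) :=
      Complex.measurable_exp.comp
        (measurable_const.mul (Complex.measurable_ofReal.comp (measurable_const.inner hvec)))
    have h2 : Measurable (fun p : EuclideanSpace ℝ (Fin d) × EuclideanSpace ℝ (Fin d) ×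
        Metric.sphere (0 : EuclideanSpace ℝ (Fin d)) 1 =>
        Complex.exp (-Complex.I * (⟪ζ, p.1⟫ : ℝ))) :=
      Complex.measurable_exp.comp
        (measurable_const.mul (Complex.measurable_ofReal.comp (measurable_const.inner measurable_fst)))
    exact (Complex.measurable_ofReal.comp hmeasK).mul (h1.sub h2)
  -- integrability of H on the triple product
  have hH : Integrable (fun p : EuclideanSpace ℝ (Fin d) × EuclideanSpace ℝ (Fin d) ×
      Metric.sphere (0 : EuclideanSpace ℝ (Fin d)) 1 => H p.1 p.2.1 p.2.2)
      (μ.prod (μ.prod ν)) := by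
    refine (hint.const_mul 2).mono' hmeasH.aestronglyMeasurable (ae_of_all _ ?_)
    rintro ⟨v, vs, σ⟩
    simp only [hHdef]
    rw [norm_mul]
    have hK0 : 0 ≤ f v * f vs * ‖v - vs‖ ^ lam *
        b (⟪v - vs, (σ : EuclideanSpace ℝ (Fin d))⟫ / ‖v - vs‖) :=
      mul_nonneg (mul_nonneg (mul_nonneg (hf_nonneg v) (hf_nonneg vs))
        (Real.rpow_nonneg (norm_nonneg _) _)) (hb_nonneg _)
    have h1 : ∀ r : ℝ, ‖Complex.exp (-Complex.I * (r : ℂ))‖ = 1 := by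
      intro r
      rw [Complex.norm_exp]
      simp
    calc ‖((f v * f vs * ‖v - vs‖ ^ lam *
            b (⟪v - vs, (σ : EuclideanSpace ℝ (Fin d))⟫ / ‖v - vs‖) : ℝ) : ℂ)‖ *
          ‖Complex.exp (-Complex.I *
            (⟪ζ, v + (1 / 2 : ℝ) • (‖v - vs‖ • (σ : EuclideanSpace ℝ (Fin d)) - (v - vs))⟫ : ℝ))
            - Complex.exp (-Complex.I * (⟪ζ, v⟫ : ℝ))‖
        ≤ ‖((f v * f vs * ‖v - vs‖ ^ lam *
            b (⟪v - vs, (σ : EuclideanSpace ℝ (Fin d))⟫ / ‖v - vs‖) : ℝ) : ℂ)‖ * 2 := by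
          refine mul_le_mul_of_nonneg_left ?_ (norm_nonneg _)
          refine (norm_sub_le _ _).trans ?_
          rw [h1, h1]; norm_num
      _ = 2 * (f v * f vs * ‖v - vs‖ ^ lam *
            b (⟪v - vs, (σ : EuclideanSpace ℝ (Fin d))⟫ / ‖v - vs‖)) := by
          rw [Complex.norm_real, Real.norm_eq_abs, abs_of_nonneg hK0]; ring
  -- transport integrability: reassociate and apply the shear (v,u) ↦ (v, v - u)
  have hassoc := measurePreserving_prodAssoc μ μ ν
  have hH1 : Integrable (fun q : (EuclideanSpace ℝ (Fin d) × EuclideanSpace ℝ (Fin d)) ×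
      Metric.sphere (0 : EuclideanSpace ℝ (Fin d)) 1 => H q.1.1 q.1.2 q.2)
      ((μ.prod μ).prod ν) :=
    (hassoc.integrable_comp hH.aestronglyMeasurable).mpr hH
  have hT : MeasurePreserving
      (fun p : EuclideanSpace ℝ (Fin d) × EuclideanSpace ℝ (Fin d) => (p.1, p.1 - p.2))
      (μ.prod μ) (μ.prod μ) := by
    have h1 := (MeasurePreserving.id μ).prod (Measure.measurePreserving_neg μ)
    have h2 := (measurePreserving_prod_add μ μ).comp h1
    simpa [Function.comp_def, sub_eq_add_neg] using h2
  have hH2 : Integrable (fun q : (EuclideanSpace ℝ (Fin d) × EuclideanSpace ℝ (Fin d)) ×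
      Metric.sphere (0 : EuclideanSpace ℝ (Fin d)) 1 => H q.1.1 (q.1.1 - q.1.2) q.2)
      ((μ.prod μ).prod ν) :=
    (((hT.prod (MeasurePreserving.id ν)).integrable_comp hH1.aestronglyMeasurable)).mpr hH1
  have hJ : Integrable (fun p : EuclideanSpace ℝ (Fin d) × EuclideanSpace ℝ (Fin d) =>
      ∫ σ, H p.1 (p.1 - p.2) σ ∂ν) (μ.prod μ) :=
    hH2.integral_prod_left
  -- key pointwise computation
  have key : ∀ u v : EuclideanSpace ℝ (Fin d), (∫ σ, H v (v - u) σ ∂ν)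
      = (((f v * f (v - u) : ℝ)) : ℂ) * Complex.exp (-Complex.I * (⟪ζ, v⟫ : ℝ)) * G u ζ := by
    intro u v
    have huu : v - (v - u) = u := by abel
    have hpt : ∀ σ : Metric.sphere (0 : EuclideanSpace ℝ (Fin d)) 1, H v (v - u) σ
        = ((((f v * f (v - u) : ℝ)) : ℂ) * Complex.exp (-Complex.I * (⟪ζ, v⟫ : ℝ)) *
            ((‖u‖ ^ lam : ℝ) : ℂ)) *
          ((b (⟪u, (σ : EuclideanSpace ℝ (Fin d))⟫ / ‖u‖) : ℂ) *
            (Complex.exp (-Complex.I *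
                ((1 / 2 : ℝ) * ⟪ζ, ‖u‖ • (σ : EuclideanSpace ℝ (Fin d))⟫ : ℝ)) *
              Complex.exp (Complex.I * ((1 / 2 : ℝ) * ⟪ζ, u⟫ : ℝ)) - 1)) := by
      intro σ
      simp only [hHdef, huu]
      have hin : ⟪ζ, v + (1 / 2 : ℝ) • (‖u‖ • (σ : EuclideanSpace ℝ (Fin d)) - u)⟫
          = ⟪ζ, v⟫ + ((1 / 2 : ℝ) * ⟪ζ, ‖u‖ • (σ : EuclideanSpace ℝ (Fin d))⟫
            - (1 / 2 : ℝ) * ⟪ζ, u⟫) := by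
        rw [inner_add_right, real_inner_smul_right, inner_sub_right]; ring
      rw [hin]
      have hexp : Complex.exp (-Complex.I * ((⟪ζ, v⟫ +
            ((1 / 2 : ℝ) * ⟪ζ, ‖u‖ • (σ : EuclideanSpace ℝ (Fin d))⟫
              - (1 / 2 : ℝ) * ⟪ζ, u⟫) : ℝ) : ℂ))
          = Complex.exp (-Complex.I * (⟪ζ, v⟫ : ℝ)) *
            (Complex.exp (-Complex.I *
                ((1 / 2 : ℝ) * ⟪ζ, ‖u‖ • (σ : EuclideanSpace ℝ (Fin d))⟫ : ℝ)) *
              Complex.exp (Complex.I * ((1 / 2 : ℝ) * ⟪ζ, u⟫ : ℝ))) := by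
        rw [← Complex.exp_add, ← Complex.exp_add]
        congr 1
        push_cast
        ring
      rw [hexp]
      push_cast
      ring
    rw [integral_congr_ae (ae_of_all _ hpt), integral_const_mul, hG]
    ring
  -- now the main chain of equalities
  have step1 : ∀ v : EuclideanSpace ℝ (Fin d),
      (∫ vs, ∫ σ, H v vs σ ∂ν ∂μ) = ∫ u, ∫ σ, H v (v - u) σ ∂ν ∂μ := fun v =>
    (integral_sub_left_eq_self (fun vs => ∫ σ, H v vs σ ∂ν) μ v).symm
  have step2 : (∫ v, ∫ u, ∫ σ, H v (v - u) σ ∂ν ∂μ ∂μ)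
      = ∫ u, ∫ v, ∫ σ, H v (v - u) σ ∂ν ∂μ ∂μ :=
    integral_integral_swap hJ
  calc c * ∫ v, ∫ vs, ∫ σ, H v vs σ ∂ν ∂μ ∂μ
      = c * ∫ v, ∫ u, ∫ σ, H v (v - u) σ ∂ν ∂μ ∂μ := by
        congr 1; exact integral_congr_ae (ae_of_all _ step1)
    _ = c * ∫ u, ∫ v, ∫ σ, H v (v - u) σ ∂ν ∂μ ∂μ := by rw [step2]
    _ = ∫ u, c * ∫ v, ∫ σ, H v (v - u) σ ∂ν ∂μ ∂μ := (integral_const_mul c _).symm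
    _ = ∫ u, G u ζ * (c * ∫ v, (((f v * f (v - u) : ℝ)) : ℂ) *
          Complex.exp (-Complex.I * (⟪ζ, v⟫ : ℝ)) ∂μ) ∂μ := by
        refine integral_congr_ae (ae_of_all _ fun u => ?_)
        simp only [key]
        rw [integral_mul_const]
        ring
end

section
/- Let d ≥ 1, let f : ℝ^d → ℂ be a Schwartz function, and let G : ℝ^d × ℝ^d → ℂ be measurable with u ↦ G(u, ζ) integrable for each ζ. Then for every ζ ∈ ℝ^d, the weighted integral of Fourier transforms of translated products equals a weighted convolution in Fourier space: ∫_{ℝ^d} G(u, ζ) · (2π)^{−d/2} ∫_{ℝ^d} f(v) f(v − u) e^{−i ζ·v} dv du = ∫_{ℝ^d} Ĝ(ξ, ζ) f̂(ζ − ξ) f̂(ξ) dξ, where f̂(ξ) = (2π)^{−d/2} ∫_{ℝ^d} f(v) e^{−i ξ·v} dv and Ĝ(ξ, ζ) = (2π)^{−d/2} ∫_{ℝ^d} G(u, ζ) e^{−i ξ·u} du. -/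
open MeasureTheory Real FourierTransform
open scoped RealInnerProductSpace

namespace WCF

variable {V : Type*} [NormedAddCommGroup V] [InnerProductSpace ℝ V] [FiniteDimensional ℝ V]
  [MeasurableSpace V] [BorelSpace V]

/-- Raw Fourier integral with kernel `exp(-i ⟪ξ, v⟫)`. -/
noncomputable def Phi (g : V → ℂ) (ξ : V) : ℂ :=
  ∫ v, g v * Complex.exp (-Complex.I * (⟪ξ, v⟫ : ℝ))

lemma phi_eq (g : V → ℂ) (ξ : V) : Phi g ξ = 𝓕 g ((2 * π)⁻¹ • ξ) := by
  rw [Real.fourier_eq']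
  unfold Phi
  congr 1 with v
  rw [smul_eq_mul, real_inner_smul_right, real_inner_comm, mul_comm]
  congr 1
  have h2π : (2 * π : ℝ) ≠ 0 := by positivity
  have h : (-2 * π * ((2 * π)⁻¹ * ⟪v, ξ⟫) : ℝ) = -⟪v, ξ⟫ := by
    rw [show (-2 * π : ℝ) = -(2 * π) by ring, neg_mul, ← mul_assoc,
      mul_inv_cancel₀ h2π, one_mul]
  rw [h]
  push_cast
  ring_nf

lemma norm_exp_I (x : ℝ) : ‖Complex.exp (Complex.I * x)‖ = 1 := by
  rw [Complex.norm_exp]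
  simp

lemma norm_exp_neg_I (x : ℝ) : ‖Complex.exp (-Complex.I * x)‖ = 1 := by
  rw [Complex.norm_exp]
  simp

lemma phi_integrable (g : SchwartzMap V ℂ) : Integrable (Phi g) := by
  have h : Phi (⇑g) = fun ξ => 𝓕 (⇑g) ((2 * π)⁻¹ • ξ) := funext (phi_eq g)
  rw [h]
  have h2π : ((2 * π)⁻¹ : ℝ) ≠ 0 := by positivity
  rw [integrable_comp_smul_iff volume (𝓕 ⇑g) h2π]
  have := (SchwartzMap.fourierTransformCLM ℂ g).integrable (μ := volume)
  rwa [SchwartzMap.fourierTransformCLM_apply] at this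

lemma phi_continuous (g : SchwartzMap V ℂ) : Continuous (Phi g) := by
  have h : Phi (⇑g) = fun ξ => 𝓕 (⇑g) ((2 * π)⁻¹ • ξ) := funext (phi_eq g)
  rw [h]
  have : Continuous (𝓕 ⇑g) := by
    show Continuous ⇑(SchwartzMap.fourierTransformCLM ℂ g)
    exact (SchwartzMap.fourierTransformCLM ℂ g).continuous
  exact this.comp (continuous_const_smul _)

lemma phi_bound (g : SchwartzMap V ℂ) :
    ∃ M : ℝ, 0 ≤ M ∧ ∀ ξ, ‖Phi g ξ‖ ≤ M := by
  refine ⟨SchwartzMap.seminorm ℝ 0 0 (SchwartzMap.fourierTransformCLM ℂ g),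
    apply_nonneg _ _, fun ξ => ?_⟩
  rw [phi_eq]
  have := (SchwartzMap.fourierTransformCLM ℂ g).norm_le_seminorm ℝ ((2 * π)⁻¹ • ξ)
  rwa [SchwartzMap.fourierTransformCLM_apply] at this

/-- Inversion: `(2π)^{-n} ∫ Phi g ξ e^{i⟪ξ,w⟫} dξ = g w`. -/
lemma phi_inv (g : SchwartzMap V ℂ) (w : V) :
    (((2 * π : ℝ) ^ (-(Module.finrank ℝ V : ℝ)) : ℝ) : ℂ) *
      ∫ ξ, Phi g ξ * Complex.exp (Complex.I * (⟪ξ, w⟫ : ℝ)) = g w := by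
  have h2π : (0 : ℝ) < 2 * π := by positivity
  set n := Module.finrank ℝ V with hn
  have hint : ∀ ξ : V, Phi (⇑g) ξ * Complex.exp (Complex.I * (⟪ξ, w⟫ : ℝ))
      = (fun η => 𝓕 (⇑g) η * Complex.exp (Complex.I * ((2 * π * ⟪η, w⟫ : ℝ)))) ((2 * π)⁻¹ • ξ) := by
    intro ξ
    rw [phi_eq]
    congr 2
    rw [real_inner_smul_left]
    have h : (2 * π * ((2 * π)⁻¹ * ⟪ξ, w⟫) : ℝ) = ⟪ξ, w⟫ := by
      rw [← mul_assoc, mul_inv_cancel₀ (by positivity : (2 * π : ℝ) ≠ 0), one_mul]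
    rw [h]
  calc (((2 * π : ℝ) ^ (-(n : ℝ)) : ℝ) : ℂ) *
      ∫ ξ, Phi (⇑g) ξ * Complex.exp (Complex.I * (⟪ξ, w⟫ : ℝ))
      = (((2 * π : ℝ) ^ (-(n : ℝ)) : ℝ) : ℂ) *
        ∫ ξ, (fun η => 𝓕 (⇑g) η * Complex.exp (Complex.I * ((2 * π * ⟪η, w⟫ : ℝ)))) ((2 * π)⁻¹ • ξ) := by
        congr 1; exact integral_congr_ae (Filter.Eventually.of_forall hint)
    _ = (((2 * π : ℝ) ^ (-(n : ℝ)) : ℝ) : ℂ) *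
        (|(((2 * π : ℝ)⁻¹ ^ n)⁻¹ : ℝ)| •
          ∫ η, 𝓕 (⇑g) η * Complex.exp (Complex.I * ((2 * π * ⟪η, w⟫ : ℝ)))) := by
        have hcs := Measure.integral_comp_smul (μ := volume)
          (fun η => 𝓕 (⇑g) η * Complex.exp (Complex.I * ((2 * π * ⟪η, w⟫ : ℝ)))) ((2 * π)⁻¹)
        rw [hcs]
    _ = ∫ η, 𝓕 (⇑g) η * Complex.exp (Complex.I * ((2 * π * ⟪η, w⟫ : ℝ))) := by
        rw [Complex.real_smul, ← mul_assoc, ← Complex.ofReal_mul]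
        have h1 : |(((2 * π : ℝ)⁻¹ ^ n)⁻¹ : ℝ)| = (2 * π : ℝ) ^ (n : ℕ) := by
          rw [← inv_pow, inv_inv, abs_pow, abs_of_pos h2π]
        have h2 : ((2 * π : ℝ) ^ (-(n : ℝ)) * |(((2 * π : ℝ)⁻¹ ^ n)⁻¹ : ℝ)| : ℝ) = 1 := by
          rw [h1, ← Real.rpow_natCast (2 * π) n, ← Real.rpow_add h2π]
          simp
        rw [h2, Complex.ofReal_one, one_mul]
    _ = 𝓕⁻ (𝓕 ⇑g) w := by
        rw [Real.fourierInv_eq']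
        congr 1 with η
        rw [smul_eq_mul, mul_comm]
        congr 1
        push_cast
        ring_nf
    _ = g w := by
        have hi : Integrable (𝓕 ⇑g) := by
          have := (SchwartzMap.fourierTransformCLM ℂ g).integrable (μ := volume)
          rwa [SchwartzMap.fourierTransformCLM_apply] at this
        exact (g.integrable (μ := volume)).fourierInv_fourier_eq hi g.continuous.continuousAt

lemma exp_cont {W : Type*} [TopologicalSpace W] {h : W → ℝ} (hh : Continuous h) (z : ℂ) :
    Continuous fun w => Complex.exp (z * (h w : ℝ)) :=
  Complex.continuous_exp.comp (continuous_const.mul (Complex.continuous_ofReal.comp hh))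

/-- Convolution theorem in our normalization. -/
lemma key (f : SchwartzMap V ℂ) (ζ u : V) :
    (((2 * π : ℝ) ^ (-(Module.finrank ℝ V : ℝ)) : ℝ) : ℂ) *
      ∫ ξ, Phi f (ζ - ξ) * Phi f ξ * Complex.exp (-Complex.I * (⟪ξ, u⟫ : ℝ))
    = ∫ v, f v * f (v - u) * Complex.exp (-Complex.I * (⟪ζ, v⟫ : ℝ)) := by
  set F : V → V → ℂ := fun ξ w =>
    f w * Complex.exp (-Complex.I * (⟪ζ - ξ, w⟫ : ℝ)) *
      (Phi f ξ * Complex.exp (-Complex.I * (⟪ξ, u⟫ : ℝ))) with hF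
  have hFc : Continuous (Function.uncurry F) := by
    refine Continuous.mul (Continuous.mul (f.continuous.comp continuous_snd) ?_)
      (Continuous.mul ((phi_continuous f).comp continuous_fst) ?_)
    · exact exp_cont ((continuous_const.sub continuous_fst).inner continuous_snd) _
    · exact exp_cont ((continuous_fst).inner continuous_const) _
  have hFint : Integrable (Function.uncurry F) (volume.prod volume) := by
    refine Integrable.mono' ((phi_integrable f).norm.mul_prod (f.integrable (μ := volume)).norm |>.const_mul 1)
      hFc.aestronglyMeasurable (Filter.Eventually.of_forall fun p => ?_)
    have : ‖Function.uncurry F p‖ = ‖f p.2‖ * ‖Phi (⇑f) p.1‖ := by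
      simp only [Function.uncurry, hF, norm_mul, norm_exp_neg_I, mul_one, one_mul]
    rw [this]; ring_nf; nlinarith [norm_nonneg (f p.2), norm_nonneg (Phi (⇑f) p.1)]
  calc (((2 * π : ℝ) ^ (-(Module.finrank ℝ V : ℝ)) : ℝ) : ℂ) *
      ∫ ξ, Phi f (ζ - ξ) * Phi f ξ * Complex.exp (-Complex.I * (⟪ξ, u⟫ : ℝ))
      = (((2 * π : ℝ) ^ (-(Module.finrank ℝ V : ℝ)) : ℝ) : ℂ) * ∫ ξ, ∫ w, F ξ w := by
        congr 1
        refine integral_congr_ae (Filter.Eventually.of_forall fun ξ => ?_)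
        dsimp only
        have : Phi (⇑f) (ζ - ξ) * Phi (⇑f) ξ * Complex.exp (-Complex.I * (⟪ξ, u⟫ : ℝ))
            = (∫ w, f w * Complex.exp (-Complex.I * (⟪ζ - ξ, w⟫ : ℝ))) *
              (Phi (⇑f) ξ * Complex.exp (-Complex.I * (⟪ξ, u⟫ : ℝ))) := by
          rw [Phi]; ring
        rw [this, ← integral_mul_const]
    _ = (((2 * π : ℝ) ^ (-(Module.finrank ℝ V : ℝ)) : ℝ) : ℂ) * ∫ w, ∫ ξ, F ξ w := by
        rw [integral_integral_swap hFint]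
    _ = ∫ w, f w * f (w - u) * Complex.exp (-Complex.I * (⟪ζ, w⟫ : ℝ)) := by
        rw [← integral_const_mul]
        refine integral_congr_ae (Filter.Eventually.of_forall fun w => ?_)
        dsimp only
        have h1 : ∀ ξ, F ξ w = (f w * Complex.exp (-Complex.I * (⟪ζ, w⟫ : ℝ))) *
            (Phi (⇑f) ξ * Complex.exp (Complex.I * (⟪ξ, w - u⟫ : ℝ))) := by
          intro ξ
          have e : Complex.exp (-Complex.I * (⟪ζ - ξ, w⟫ : ℝ)) *
              Complex.exp (-Complex.I * (⟪ξ, u⟫ : ℝ))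
              = Complex.exp (-Complex.I * (⟪ζ, w⟫ : ℝ)) *
                Complex.exp (Complex.I * (⟪ξ, w - u⟫ : ℝ)) := by
            rw [← Complex.exp_add, ← Complex.exp_add]
            congr 1
            rw [inner_sub_left, inner_sub_right]
            push_cast
            ring
          simp only [hF]
          linear_combination (f w * Phi (⇑f) ξ) * e
        rw [integral_congr_ae (Filter.Eventually.of_forall h1), integral_const_mul]
        have h2 := phi_inv f (w - u)
        linear_combination (f w * Complex.exp (-Complex.I * (⟪ζ, w⟫ : ℝ))) * h2

end WCF

open WCF in
/-- Writing the Fourier transform of the translated product `f(v) f(v-u)` as a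
convolution of Fourier transforms turns the weighted integral into a weighted
convolution in Fourier space. -/
theorem weighted_convolution_fourier
    (d : ℕ) (hd : 1 ≤ d)
    (f : SchwartzMap (EuclideanSpace ℝ (Fin d)) ℂ)
    (G : EuclideanSpace ℝ (Fin d) → EuclideanSpace ℝ (Fin d) → ℂ)
    (hG_meas : Measurable (fun p : EuclideanSpace ℝ (Fin d) × EuclideanSpace ℝ (Fin d) =>
      G p.1 p.2))
    (hG_int : ∀ ζ : EuclideanSpace ℝ (Fin d), Integrable (fun u => G u ζ))
    (ζ : EuclideanSpace ℝ (Fin d)) :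
    (∫ u : EuclideanSpace ℝ (Fin d),
      G u ζ * (((((2 * π) ^ (-(d : ℝ) / 2) : ℝ)) : ℂ) *
        ∫ v : EuclideanSpace ℝ (Fin d),
          f v * f (v - u) * Complex.exp (-Complex.I * (⟪ζ, v⟫ : ℝ))))
    =
    ∫ ξ : EuclideanSpace ℝ (Fin d),
      (((((2 * π) ^ (-(d : ℝ) / 2) : ℝ)) : ℂ) *
          ∫ u : EuclideanSpace ℝ (Fin d), G u ζ * Complex.exp (-Complex.I * (⟪ξ, u⟫ : ℝ))) *
        (((((2 * π) ^ (-(d : ℝ) / 2) : ℝ)) : ℂ) *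
          ∫ v : EuclideanSpace ℝ (Fin d), f v * Complex.exp (-Complex.I * (⟪ζ - ξ, v⟫ : ℝ))) *
        (((((2 * π) ^ (-(d : ℝ) / 2) : ℝ)) : ℂ) *
          ∫ v : EuclideanSpace ℝ (Fin d), f v * Complex.exp (-Complex.I * (⟪ξ, v⟫ : ℝ))) := by
  have h2π : (0 : ℝ) < 2 * π := by positivity
  set c : ℝ := (2 * π) ^ (-(d : ℝ) / 2) with hcdef
  have hc0 : 0 < c := Real.rpow_pos_of_pos h2π _
  have hcc : ((c : ℂ)) * c
      = (((2 * π : ℝ) ^ (-(Module.finrank ℝ (EuclideanSpace ℝ (Fin d)) : ℝ)) : ℝ) : ℂ) := by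
    rw [← Complex.ofReal_mul]
    congr 1
    rw [hcdef, ← Real.rpow_add h2π]
    have h : Module.finrank ℝ (EuclideanSpace ℝ (Fin d)) = d := finrank_euclideanSpace_fin
    rw [h]
    norm_num
  obtain ⟨M, hM0, hM⟩ := phi_bound f
  set Gz : EuclideanSpace ℝ (Fin d) → ℂ := fun u => G u ζ with hGzdef
  have hGzi : Integrable Gz := hG_int ζ
  have hGzm : Measurable fun p : EuclideanSpace ℝ (Fin d) × EuclideanSpace ℝ (Fin d) => Gz p.2 :=
    hG_meas.comp (measurable_snd.prodMk measurable_const)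
  show (∫ u, Gz u * ((c : ℂ) *
        ∫ v, f v * f (v - u) * Complex.exp (-Complex.I * (⟪ζ, v⟫ : ℝ))))
      = ∫ ξ, ((c : ℂ) * Phi Gz ξ) * ((c : ℂ) * Phi (⇑f) (ζ - ξ)) * ((c : ℂ) * Phi (⇑f) ξ)
  symm
  set F2 : EuclideanSpace ℝ (Fin d) → EuclideanSpace ℝ (Fin d) → ℂ :=
    fun ξ u => Gz u * Complex.exp (-Complex.I * (⟪ξ, u⟫ : ℝ)) *
      ((c : ℂ) * ((c : ℂ) * Phi (⇑f) (ζ - ξ)) * ((c : ℂ) * Phi (⇑f) ξ)) with hF2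
  have hF2m : AEStronglyMeasurable (Function.uncurry F2) (volume.prod volume) := by
    refine AEStronglyMeasurable.mul (AEStronglyMeasurable.mul hGzm.aestronglyMeasurable ?_) ?_
    · exact (exp_cont ((continuous_fst).inner continuous_snd) (-Complex.I)).aestronglyMeasurable
    · refine Continuous.aestronglyMeasurable ?_
      exact ((continuous_const.mul (continuous_const.mul ((phi_continuous f).comp
          (continuous_const.sub continuous_fst)))).mul
        (continuous_const.mul ((phi_continuous f).comp continuous_fst)))
  have hF2int : Integrable (Function.uncurry F2) (volume.prod volume) := by
    refine Integrable.mono'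
      (((phi_integrable f).norm.mul_prod hGzi.norm).const_mul (c * c * c * M)) hF2m
      (Filter.Eventually.of_forall fun p => ?_)
    have hnorm : ‖Function.uncurry F2 p‖
        = c * (c * (c * (‖Gz p.2‖ * ‖Phi (⇑f) (ζ - p.1)‖ * ‖Phi (⇑f) p.1‖))) := by
      simp only [Function.uncurry, hF2, norm_mul, norm_exp_neg_I, Complex.norm_real,
        Real.norm_eq_abs, abs_of_pos hc0, mul_one, one_mul]
      ring
    rw [hnorm]
    calc c * (c * (c * (‖Gz p.2‖ * ‖Phi (⇑f) (ζ - p.1)‖ * ‖Phi (⇑f) p.1‖)))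
        = (c * c * c * (‖Gz p.2‖ * ‖Phi (⇑f) p.1‖)) * ‖Phi (⇑f) (ζ - p.1)‖ := by ring
      _ ≤ (c * c * c * (‖Gz p.2‖ * ‖Phi (⇑f) p.1‖)) * M :=
          mul_le_mul_of_nonneg_left (hM _) (by positivity)
      _ = c * c * c * M * (‖Phi (⇑f) p.1‖ * ‖Gz p.2‖) := by ring
  calc ∫ ξ, ((c : ℂ) * Phi Gz ξ) * ((c : ℂ) * Phi (⇑f) (ζ - ξ)) * ((c : ℂ) * Phi (⇑f) ξ)
      = ∫ ξ, ∫ u, F2 ξ u := by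
        refine integral_congr_ae (Filter.Eventually.of_forall fun ξ => ?_)
        dsimp only
        have h3 : ((c : ℂ) * Phi Gz ξ) * ((c : ℂ) * Phi (⇑f) (ζ - ξ)) * ((c : ℂ) * Phi (⇑f) ξ)
            = (∫ u, Gz u * Complex.exp (-Complex.I * (⟪ξ, u⟫ : ℝ))) *
              ((c : ℂ) * ((c : ℂ) * Phi (⇑f) (ζ - ξ)) * ((c : ℂ) * Phi (⇑f) ξ)) := by
          rw [Phi]; ring
        rw [h3, ← integral_mul_const]
    _ = ∫ u, ∫ ξ, F2 ξ u := integral_integral_swap hF2int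
    _ = ∫ u, Gz u * ((c : ℂ) *
          ∫ v, f v * f (v - u) * Complex.exp (-Complex.I * (⟪ζ, v⟫ : ℝ))) := by
        refine integral_congr_ae (Filter.Eventually.of_forall fun u => ?_)
        dsimp only
        have h1 : ∀ ξ, F2 ξ u = (Gz u * (c : ℂ) * ((c : ℂ) * (c : ℂ))) *
            (Phi (⇑f) (ζ - ξ) * Phi (⇑f) ξ * Complex.exp (-Complex.I * (⟪ξ, u⟫ : ℝ))) := by
          intro ξ; simp only [hF2]; ring
        rw [integral_congr_ae (Filter.Eventually.of_forall h1), integral_const_mul]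
        have h2 : ((c : ℂ) * (c : ℂ)) *
            (∫ ξ, Phi (⇑f) (ζ - ξ) * Phi (⇑f) ξ * Complex.exp (-Complex.I * (⟪ξ, u⟫ : ℝ)))
            = ∫ v, f v * f (v - u) * Complex.exp (-Complex.I * (⟪ζ, v⟫ : ℝ)) := by
          rw [hcc]; exact key f ζ u
        linear_combination (Gz u * (c : ℂ)) * h2
end
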